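/- arXiv:1510.04837 — 2 statements merged into one kernel-verified Lean document; each statement's English description precedes it below -/
import Mathlib

section
/- Let δ ≥ 0 be an integer and j an integer ≥ 0. Then for all 0 ≤ ρ ≤ 1, R_{2j}^{0,0}(ρ)(1−ρ²)^{δ} = Σ_i F_{ji}^{δ} R_{2i}^{0,δ}(ρ), where the sum is over all integers i with max(0, j−δ) ≤ i ≤ j, and F_{ji}^{δ} = (−1)^{j−i} ((δ+2i+3/2)/(δ+i+j+3/2)) · C(δ, j−i) · C(i+j+1/2, j) / C(δ+i+j+1/2, j), with C(·,·) generalized binomial coefficients. -/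
set_option maxHeartbeats 1000000
set_option maxRecDepth 8000


open Real MeasureTheory

noncomputable def genBinom (a : ℝ) (p : ℕ) : ℝ :=
  (∏ j ∈ Finset.range p, (a - j)) / (Nat.factorial p : ℝ)

noncomputable def jacobiP (k : ℕ) (a b : ℝ) (x : ℝ) : ℝ :=
  ∑ j ∈ Finset.range (k + 1),
    genBinom ((k : ℝ) + a) (k - j) * genBinom ((k : ℝ) + b) j *
      ((x - 1) / 2) ^ j * ((x + 1) / 2) ^ (k - j)

/-- generalized Pochhammer symbol `(x)_α = Γ(x+α)/Γ(x)` -/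
noncomputable def pochG (x α : ℝ) : ℝ := Real.Gamma (x + α) / Real.Gamma x

/-- integer-order Pochhammer symbol `(x)_k = x(x+1)⋯(x+k−1)` -/
noncomputable def pochN (x : ℝ) (k : ℕ) : ℝ := ∏ j ∈ Finset.range k, (x + j)

/-- generalized 3D Zernike radial function `R_{l+2p}^{l,α}` -/
noncomputable def R3 (α : ℝ) (l p : ℕ) (ρ : ℝ) : ℝ :=
  ρ ^ l * (1 - ρ ^ 2) ^ α * jacobiP p α ((l : ℝ) + 1 / 2) (2 * ρ ^ 2 - 1)

/-- generalized 2D Zernike radial function `²R_{m+2p}^{m,α}` -/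
noncomputable def R2 (α : ℝ) (m p : ℕ) (ρ : ℝ) : ℝ :=
  ρ ^ m * (1 - ρ ^ 2) ^ α * jacobiP p α (m : ℝ) (2 * ρ ^ 2 - 1)

/-- spherical Bessel function of real order `a` -/
noncomputable def sphBessel (a : ℝ) (z : ℝ) : ℝ :=
  Real.sqrt π / 2 * (z / 2) ^ a *
    ∑' k : ℕ, (-(z ^ 2) / 4) ^ k / ((Nat.factorial k : ℝ) * Real.Gamma ((k : ℝ) + a + 3 / 2))

/-- Gegenbauer polynomial `C_n^λ` -/
noncomputable def gegenbauer (n : ℕ) (lam : ℝ) (x : ℝ) : ℝ :=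
  ∑ k ∈ Finset.range (n / 2 + 1),
    (-1) ^ k * Real.Gamma (((n - k : ℕ) : ℝ) + lam) /
      (Real.Gamma lam * (Nat.factorial k : ℝ) * (Nat.factorial (n - 2 * k) : ℝ)) *
      (2 * x) ^ (n - 2 * k)

/-- Legendre polynomial `P_l` -/
noncomputable def legendreFun (l : ℕ) (x : ℝ) : ℝ :=
  (1 / 2 ^ l) * ∑ k ∈ Finset.range (l + 1),
    ((Nat.choose l k : ℝ)) ^ 2 * (x - 1) ^ (l - k) * (x + 1) ^ k

/-- associated Legendre function `P_l^m` -/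
noncomputable def assocLegendre (l m : ℕ) (x : ℝ) : ℝ :=
  (1 - x ^ 2) ^ ((m : ℝ) / 2) * iteratedDeriv m (legendreFun l) x

/-- spherical harmonic `Y_l^m`, evaluated at a (unit) vector `v ∈ ℝ³`:
`cos θ = v 2`, `φ = arg (v 0 + i v 1)`. -/
noncomputable def sphHarm (l : ℕ) (m : ℤ) (v : EuclideanSpace ℝ (Fin 3)) : ℂ :=
  (-1 : ℂ) ^ m *
    (Real.sqrt ((2 * l + 1) / (4 * π) *
      (Nat.factorial (l - m.natAbs) : ℝ) / (Nat.factorial (l + m.natAbs) : ℝ)) : ℝ) *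
    (assocLegendre l m.natAbs (v 2) : ℝ) *
    Complex.exp (Complex.I * m * (Complex.arg (v 0 + Complex.I * v 1) : ℝ))

/-- generalized 3D Zernike function `Z_{nl}^{m,α}` on ℝ³ -/
noncomputable def Z3 (α : ℝ) (l p : ℕ) (m : ℤ) (ω : EuclideanSpace ℝ (Fin 3)) : ℂ :=
  (R3 α l p ‖ω‖ : ℝ) * sphHarm l m (‖ω‖⁻¹ • ω)

noncomputable def ff (k : ℕ) (x : ℝ) : ℝ := ∏ t ∈ Finset.range k, (x - t)
lemma genBinom_eq_ff (a : ℝ) (p : ℕ) : genBinom a p = ff p a / (Nat.factorial p : ℝ) := rfl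
lemma ff_succ (k : ℕ) (x : ℝ) : ff (k+1) x = ff k x * (x - k) := Finset.prod_range_succ _ _
lemma ff_succ' (k : ℕ) (x : ℝ) : ff (k+1) x = x * ff k (x-1) := by
  rw [ff, Finset.prod_range_succ']
  simp only [Nat.cast_zero, sub_zero]
  rw [mul_comm, ff]
  congr 1
  refine Finset.prod_congr rfl fun t _ => ?_
  push_cast
  ring
lemma gb_zero (x : ℝ) : genBinom x 0 = 1 := by simp [genBinom]
lemma fact_ne (n : ℕ) : ((Nat.factorial n : ℝ)) ≠ 0 := by
  exact_mod_cast (Nat.factorial_pos n).ne'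
lemma cg_s0 (n : ℕ) (a b : ℝ) :
    (2*(n:ℝ)+a+b+3) * genBinom ((n:ℝ)+1+a) (n+1)
      = ((n:ℝ)+a+b+2) * genBinom ((n:ℝ)+2+a) (n+1)
        - ((n:ℝ)+1+b) * genBinom ((n:ℝ)+1+a) n := by
  have e1 : ff (n+1) ((n:ℝ)+1+a) = ff n ((n:ℝ)+1+a) * (a+1) := by
    rw [ff_succ]; congr 1; ring
  have e2 : ff (n+1) ((n:ℝ)+2+a) = ((n:ℝ)+2+a) * ff n ((n:ℝ)+1+a) := by
    rw [ff_succ', show (n:ℝ)+2+a-1 = (n:ℝ)+1+a from by ring]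
  rw [genBinom_eq_ff, genBinom_eq_ff, genBinom_eq_ff, e1, e2, Nat.factorial_succ]
  have h1 := fact_ne n
  have h2 : ((n:ℝ)+1) ≠ 0 := by positivity
  push_cast
  field_simp
  ring
lemma cg_top (n : ℕ) (a b : ℝ) :
    (2*(n:ℝ)+a+b+3) * genBinom ((n:ℝ)+1+b) (n+1)
      = ((n:ℝ)+a+b+2) * genBinom ((n:ℝ)+1+b) (n+1)
        + ((n:ℝ)+1+b) * genBinom ((n:ℝ)+b) n := by
  have e1 : ff (n+1) ((n:ℝ)+1+b) = ((n:ℝ)+1+b) * ff n ((n:ℝ)+b) := by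
    rw [ff_succ', show (n:ℝ)+1+b-1 = (n:ℝ)+b from by ring]
  rw [genBinom_eq_ff, genBinom_eq_ff, e1, Nat.factorial_succ]
  have h1 := fact_ne n
  have h2 : ((n:ℝ)+1) ≠ 0 := by positivity
  push_cast
  field_simp
  ring
lemma cg_mid (s m : ℕ) (a b : ℝ) :
    (2*((s:ℝ)+(m:ℝ)+1)+a+b+3) * (genBinom ((s:ℝ)+(m:ℝ)+2+a) (m+1) * genBinom ((s:ℝ)+(m:ℝ)+2+b) (s+1))
      = ((s:ℝ)+(m:ℝ)+a+b+3) * (genBinom ((s:ℝ)+(m:ℝ)+3+a) (m+1) * genBinom ((s:ℝ)+(m:ℝ)+2+b) (s+1))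
        - ((s:ℝ)+(m:ℝ)+2+b) * (genBinom ((s:ℝ)+(m:ℝ)+2+a) m * genBinom ((s:ℝ)+(m:ℝ)+1+b) (s+1))
        + ((s:ℝ)+(m:ℝ)+2+b) * (genBinom ((s:ℝ)+(m:ℝ)+2+a) (m+1) * genBinom ((s:ℝ)+(m:ℝ)+1+b) s) := by
  have e1 : ff (m+1) ((s:ℝ)+(m:ℝ)+2+a) = ff m ((s:ℝ)+(m:ℝ)+2+a) * ((s:ℝ)+a+2) := by
    rw [ff_succ]; congr 1; ring
  have e2 : ff (m+1) ((s:ℝ)+(m:ℝ)+3+a) = ((s:ℝ)+(m:ℝ)+3+a) * ff m ((s:ℝ)+(m:ℝ)+2+a) := by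
    rw [ff_succ', show (s:ℝ)+(m:ℝ)+3+a-1 = (s:ℝ)+(m:ℝ)+2+a from by ring]
  have e3 : ff (s+1) ((s:ℝ)+(m:ℝ)+2+b) = ((s:ℝ)+(m:ℝ)+2+b) * ff s ((s:ℝ)+(m:ℝ)+1+b) := by
    rw [ff_succ', show (s:ℝ)+(m:ℝ)+2+b-1 = (s:ℝ)+(m:ℝ)+1+b from by ring]
  have e4 : ff (s+1) ((s:ℝ)+(m:ℝ)+1+b) = ff s ((s:ℝ)+(m:ℝ)+1+b) * ((m:ℝ)+b+1) := by
    rw [ff_succ]; congr 1; ring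
  simp only [genBinom_eq_ff]
  rw [e1, e2, e3, e4, Nat.factorial_succ (m), Nat.factorial_succ (s)]
  have h1 := fact_ne m
  have h2 := fact_ne s
  have h3 : ((m:ℝ)+1) ≠ 0 := by positivity
  have h4 : ((s:ℝ)+1) ≠ 0 := by positivity
  push_cast
  field_simp
  ring

lemma contiguous (n : ℕ) (a b x : ℝ) :
    (2*(n:ℝ) + a + b + 3) * jacobiP (n+1) a b x
      = ((n:ℝ) + a + b + 2) * jacobiP (n+1) (a+1) b x
        - ((n:ℝ) + 1 + b) * jacobiP n (a+1) b x := by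
  have huv : (x+1)/2 = (x-1)/2 + 1 := by ring
  have hS3 : jacobiP n (a+1) b x
      = (∑ s ∈ Finset.range (n+1),
          genBinom ((n:ℝ)+(a+1)) (n-s) * genBinom ((n:ℝ)+b) s * ((x-1)/2)^s * ((x+1)/2)^(n+1-s))
        - ∑ s ∈ Finset.range (n+1),
          genBinom ((n:ℝ)+(a+1)) (n-s) * genBinom ((n:ℝ)+b) s * ((x-1)/2)^(s+1) * ((x+1)/2)^(n-s) := by
    rw [jacobiP, ← Finset.sum_sub_distrib]
    refine Finset.sum_congr rfl fun s hs => ?_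
    have hsn : s ≤ n := Nat.lt_succ_iff.mp (Finset.mem_range.mp hs)
    have hpow : ((x+1)/2)^(n+1-s) = ((x+1)/2)^(n-s) * ((x+1)/2) := by
      rw [← pow_succ]; congr 1; omega
    rw [hpow, huv]
    ring
  rw [hS3, jacobiP, jacobiP]
  have hsuff : ∑ s ∈ Finset.range (n+1+1),
      ((2*(n:ℝ)+a+b+3) * (genBinom ((↑(n+1):ℝ)+a) (n+1-s) * genBinom ((↑(n+1):ℝ)+b) s * ((x-1)/2)^s * ((x+1)/2)^(n+1-s))
       - ((n:ℝ)+a+b+2) * (genBinom ((↑(n+1):ℝ)+(a+1)) (n+1-s) * genBinom ((↑(n+1):ℝ)+b) s * ((x-1)/2)^s * ((x+1)/2)^(n+1-s))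
       + (if s ≤ n then ((n:ℝ)+1+b) * (genBinom ((n:ℝ)+(a+1)) (n-s) * genBinom ((n:ℝ)+b) s * ((x-1)/2)^s * ((x+1)/2)^(n+1-s)) else 0))
      = ∑ s ∈ Finset.range (n+1), ((n:ℝ)+1+b) * (genBinom ((n:ℝ)+(a+1)) (n-s) * genBinom ((n:ℝ)+b) s * ((x-1)/2)^(s+1) * ((x+1)/2)^(n-s)) := by
    rw [Finset.sum_range_succ' _ (n+1)]
    have h0 : (2*(n:ℝ)+a+b+3) * (genBinom ((↑(n+1):ℝ)+a) (n+1-0) * genBinom ((↑(n+1):ℝ)+b) 0 * ((x-1)/2)^0 * ((x+1)/2)^(n+1-0))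
       - ((n:ℝ)+a+b+2) * (genBinom ((↑(n+1):ℝ)+(a+1)) (n+1-0) * genBinom ((↑(n+1):ℝ)+b) 0 * ((x-1)/2)^0 * ((x+1)/2)^(n+1-0))
       + (if 0 ≤ n then ((n:ℝ)+1+b) * (genBinom ((n:ℝ)+(a+1)) (n-0) * genBinom ((n:ℝ)+b) 0 * ((x-1)/2)^0 * ((x+1)/2)^(n+1-0)) else 0) = 0 := by
      rw [if_pos (Nat.zero_le n)]
      simp only [Nat.sub_zero, pow_zero, gb_zero, mul_one, one_mul]
      push_cast
      have h := cg_s0 n a b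
      ring_nf at h ⊢
      linear_combination (((x+1)/2)^(n+1)) * h
    rw [h0, add_zero]
    refine Finset.sum_congr rfl fun s hs => ?_
    have hsn : s ≤ n := Nat.lt_succ_iff.mp (Finset.mem_range.mp hs)
    rcases eq_or_lt_of_le hsn with rfl | hlt
    · rw [if_neg (by omega)]
      simp only [Nat.sub_self, Nat.add_sub_cancel, pow_zero, gb_zero, mul_one, one_mul, add_zero]
      push_cast
      have h := cg_top s a b
      ring_nf at h ⊢
      linear_combination (((x-1)/2)^(s+1)) * h
    · obtain ⟨m, rfl⟩ : ∃ m, n = s+m+1 := ⟨n-s-1, by omega⟩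
      rw [if_pos (by omega)]
      simp only [show s+m+1+1-(s+1) = m+1 from by omega, show s+m+1-(s+1) = m from by omega,
        show s+m+1-s = m+1 from by omega]
      push_cast
      have h := cg_mid s m a b
      ring_nf at h ⊢
      linear_combination (((x-1)/2)^(s+1) * ((x+1)/2)^(m+1)) * h
  rw [Finset.sum_add_distrib, Finset.sum_sub_distrib] at hsuff
  have hT1 : ∑ s ∈ Finset.range (n+1+1),
      (if s ≤ n then ((n:ℝ)+1+b) * (genBinom ((n:ℝ)+(a+1)) (n-s) * genBinom ((n:ℝ)+b) s * ((x-1)/2)^s * ((x+1)/2)^(n+1-s)) else 0)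
      = ∑ s ∈ Finset.range (n+1), ((n:ℝ)+1+b) * (genBinom ((n:ℝ)+(a+1)) (n-s) * genBinom ((n:ℝ)+b) s * ((x-1)/2)^s * ((x+1)/2)^(n+1-s)) := by
    rw [Finset.sum_range_succ, if_neg (by omega), add_zero]
    exact Finset.sum_congr rfl fun s hs => if_pos (Nat.lt_succ_iff.mp (Finset.mem_range.mp hs))
  rw [hT1] at hsuff
  have m1 : ∑ s ∈ Finset.range (n+1), ((n:ℝ)+1+b) * (genBinom ((n:ℝ)+(a+1)) (n-s) * genBinom ((n:ℝ)+b) s * ((x-1)/2)^s * ((x+1)/2)^(n+1-s))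
      = ((n:ℝ)+1+b) * ∑ s ∈ Finset.range (n+1), genBinom ((n:ℝ)+(a+1)) (n-s) * genBinom ((n:ℝ)+b) s * ((x-1)/2)^s * ((x+1)/2)^(n+1-s) :=
    (Finset.mul_sum _ _ _).symm
  have m2 : ∑ s ∈ Finset.range (n+1), ((n:ℝ)+1+b) * (genBinom ((n:ℝ)+(a+1)) (n-s) * genBinom ((n:ℝ)+b) s * ((x-1)/2)^(s+1) * ((x+1)/2)^(n-s))
      = ((n:ℝ)+1+b) * ∑ s ∈ Finset.range (n+1), genBinom ((n:ℝ)+(a+1)) (n-s) * genBinom ((n:ℝ)+b) s * ((x-1)/2)^(s+1) * ((x+1)/2)^(n-s) :=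
    (Finset.mul_sum _ _ _).symm
  have m3 : ∑ s ∈ Finset.range (n+1+1), (2*(n:ℝ)+a+b+3) * (genBinom ((↑(n+1):ℝ)+a) (n+1-s) * genBinom ((↑(n+1):ℝ)+b) s * ((x-1)/2)^s * ((x+1)/2)^(n+1-s))
      = (2*(n:ℝ)+a+b+3) * ∑ s ∈ Finset.range (n+1+1), genBinom ((↑(n+1):ℝ)+a) (n+1-s) * genBinom ((↑(n+1):ℝ)+b) s * ((x-1)/2)^s * ((x+1)/2)^(n+1-s) :=
    (Finset.mul_sum _ _ _).symm
  have m4 : ∑ s ∈ Finset.range (n+1+1), ((n:ℝ)+a+b+2) * (genBinom ((↑(n+1):ℝ)+(a+1)) (n+1-s) * genBinom ((↑(n+1):ℝ)+b) s * ((x-1)/2)^s * ((x+1)/2)^(n+1-s))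
      = ((n:ℝ)+a+b+2) * ∑ s ∈ Finset.range (n+1+1), genBinom ((↑(n+1):ℝ)+(a+1)) (n+1-s) * genBinom ((↑(n+1):ℝ)+b) s * ((x-1)/2)^s * ((x+1)/2)^(n+1-s) :=
    (Finset.mul_sum _ _ _).symm
  rw [m1, m2, m3, m4] at hsuff
  linarith [hsuff]

lemma gb_shift (x : ℝ) (k : ℕ) : genBinom (x+1) k * (x+1-(k:ℝ)) = (x+1) * genBinom x k := by
  have h : ff k (x+1) * (x+1-(k:ℝ)) = (x+1) * ff k x := by
    have h1 := ff_succ k (x+1)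
    have h2 := ff_succ' k (x+1)
    rw [h1] at h2
    rw [h2]
    norm_num
  rw [genBinom_eq_ff, genBinom_eq_ff, div_mul_eq_mul_div, h, mul_div_assoc]
lemma gb_succ (x : ℝ) (k : ℕ) : ((k:ℝ)+1) * genBinom x (k+1) = (x - (k:ℝ)) * genBinom x k := by
  rw [genBinom_eq_ff, genBinom_eq_ff, ff_succ, Nat.factorial_succ]
  have hk := fact_ne k
  push_cast
  field_simp
lemma gb_pascal (x : ℝ) (k : ℕ) : genBinom (x+1) (k+1) = genBinom x (k+1) + genBinom x k := by
  have h1 : ff (k+1) (x+1) = (x+1) * ff k x := by rw [ff_succ']; norm_num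
  have h2 : ff (k+1) x = ff k x * (x - (k:ℝ)) := ff_succ k x
  rw [genBinom_eq_ff, genBinom_eq_ff, genBinom_eq_ff, h1, h2, Nat.factorial_succ]
  have hk := fact_ne k
  have hk1 : ((k:ℝ)+1) ≠ 0 := by positivity
  push_cast
  field_simp
  ring
lemma gb_pos (x : ℝ) (k : ℕ) (h : (k:ℝ) < x + 1) : 0 < genBinom x k := by
  rw [genBinom_eq_ff]
  apply div_pos
  · apply Finset.prod_pos
    intro t ht
    have : (t:ℝ)+1 ≤ k := by exact_mod_cast Finset.mem_range.mp ht
    linarith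
  · exact_mod_cast Nat.factorial_pos k


lemma gb_nat_zero (d k : ℕ) (h : d < k) : genBinom (d:ℝ) k = 0 := by
  rw [genBinom_eq_ff, ff, Finset.prod_eq_zero (Finset.mem_range.mpr h) (by simp), zero_div]

noncomputable def Fc (d j i : ℕ) : ℝ :=
  (-1) ^ (j - i) * (((d:ℝ) + 2*(i:ℝ) + 3/2) / ((d:ℝ) + (i:ℝ) + (j:ℝ) + 3/2)) *
    genBinom (d:ℝ) (j - i) * genBinom ((i:ℝ) + (j:ℝ) + 1/2) j /
    genBinom ((d:ℝ) + (i:ℝ) + (j:ℝ) + 1/2) j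

lemma crec_top (d j : ℕ) :
    (((d:ℝ)+1+2*(j:ℝ)+3/2)/((d:ℝ)+1+2*(j:ℝ)+3/2)) * genBinom (2*(j:ℝ)+1/2) j
        / genBinom ((d:ℝ)+2*(j:ℝ)+1/2+1) j
      = (((d:ℝ)+2*(j:ℝ)+3/2)/((d:ℝ)+2*(j:ℝ)+3/2)) * genBinom (2*(j:ℝ)+1/2) j
          / genBinom ((d:ℝ)+2*(j:ℝ)+1/2) j * (((j:ℝ)+(d:ℝ)+3/2)/(2*(j:ℝ)+(d:ℝ)+3/2)) := by
  have hd0 : (0:ℝ) ≤ (d:ℝ) := Nat.cast_nonneg d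
  have hj0 : (0:ℝ) ≤ (j:ℝ) := Nat.cast_nonneg j
  have hB'ne : genBinom ((d:ℝ)+2*(j:ℝ)+1/2+1) j ≠ 0 := (gb_pos _ _ (by linarith)).ne'
  have hBne : genBinom ((d:ℝ)+2*(j:ℝ)+1/2) j ≠ 0 := (gb_pos _ _ (by linarith)).ne'
  have hr := gb_shift ((d:ℝ)+2*(j:ℝ)+1/2) j
  have h1 : ((d:ℝ)+1+2*(j:ℝ)+3/2) ≠ 0 := by positivity
  have h2 : ((d:ℝ)+2*(j:ℝ)+3/2) ≠ 0 := by positivity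
  have h3 : (2*(j:ℝ)+(d:ℝ)+3/2) ≠ 0 := by positivity
  rw [div_self h1, div_self h2]
  simp only [one_mul]
  rw [div_mul_div_comm]
  rw [div_eq_div_iff hB'ne (by exact mul_ne_zero hBne h3)]
  linear_combination (-(genBinom (2*(j:ℝ)+1/2) j)) * hr

lemma crec_core (d i k : ℕ) :
    ((d:ℝ)+2*(i:ℝ)+5/2) * genBinom ((d:ℝ)+1) (k+1) * genBinom (2*(i:ℝ)+(k:ℝ)+3/2) (i+k+1)
        * (((d:ℝ)+2*(i:ℝ)+(k:ℝ)+5/2) * genBinom ((d:ℝ)+2*(i:ℝ)+(k:ℝ)+3/2) (i+k+1))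
      = (genBinom ((d:ℝ)) (k+1) * genBinom (2*(i:ℝ)+(k:ℝ)+3/2) (i+k+1) * ((d:ℝ)+(i:ℝ)+3/2))
          * ((d:ℝ)+2*(i:ℝ)+(k:ℝ)+7/2) * genBinom ((d:ℝ)+2*(i:ℝ)+(k:ℝ)+3/2+1) (i+k+1)
        + (genBinom ((d:ℝ)) k * genBinom (2*(i:ℝ)+(k:ℝ)+3/2+1) (i+k+1) * ((i:ℝ)+3/2))
          * (((d:ℝ)+2*(i:ℝ)+(k:ℝ)+5/2) * genBinom ((d:ℝ)+2*(i:ℝ)+(k:ℝ)+3/2) (i+k+1)) := by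
  have hn : ((i+k+1:ℕ):ℝ) = (i:ℝ)+(k:ℝ)+1 := by push_cast; ring
  have hpas := gb_pascal (d:ℝ) k
  have hsucc := gb_succ (d:ℝ) k
  have hr3 := gb_shift (2*(i:ℝ)+(k:ℝ)+3/2) (i+k+1)
  have hr4 := gb_shift ((d:ℝ)+2*(i:ℝ)+(k:ℝ)+3/2) (i+k+1)
  rw [hn] at hr3 hr4
  linear_combination
    (((d:ℝ)+(i:ℝ)+3/2) * genBinom ((d:ℝ)+2*(i:ℝ)+(k:ℝ)+3/2+1) (i+k+1) * genBinom (2*(i:ℝ)+(k:ℝ)+3/2) (i+k+1) * ((d:ℝ)+2*(i:ℝ)+5/2)) * hpas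
    - (((d:ℝ)+(i:ℝ)+3/2) * genBinom ((d:ℝ)+2*(i:ℝ)+(k:ℝ)+3/2+1) (i+k+1) * genBinom (2*(i:ℝ)+(k:ℝ)+3/2) (i+k+1)) * hsucc
    - (((d:ℝ)+(i:ℝ)+3/2) * genBinom ((d:ℝ)+2*(i:ℝ)+(k:ℝ)+3/2+1) (i+k+1) * genBinom ((d:ℝ)) k) * hr3
    - (((d:ℝ)+2*(i:ℝ)+5/2) * genBinom ((d:ℝ)+1) (k+1) * genBinom (2*(i:ℝ)+(k:ℝ)+3/2) (i+k+1)
        - ((i:ℝ)+3/2) * genBinom ((d:ℝ)) k * genBinom (2*(i:ℝ)+(k:ℝ)+3/2+1) (i+k+1)) * hr4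

lemma crec_mid (d i k : ℕ) :
    ((-1:ℝ)^(k+1) * (((d:ℝ)+2*(i:ℝ)+5/2) * genBinom ((d:ℝ)+1) (k+1) * genBinom (2*(i:ℝ)+(k:ℝ)+3/2) (i+k+1)))
        / (((d:ℝ)+2*(i:ℝ)+(k:ℝ)+7/2) * genBinom ((d:ℝ)+2*(i:ℝ)+(k:ℝ)+3/2+1) (i+k+1))
      = ((-1:ℝ)^(k+1) * (((d:ℝ)+2*(i:ℝ)+3/2) * genBinom ((d:ℝ)) (k+1) * genBinom (2*(i:ℝ)+(k:ℝ)+3/2) (i+k+1) * ((i:ℝ)+(d:ℝ)+3/2)))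
          / (((d:ℝ)+2*(i:ℝ)+(k:ℝ)+5/2) * genBinom ((d:ℝ)+2*(i:ℝ)+(k:ℝ)+3/2) (i+k+1) * (2*(i:ℝ)+(d:ℝ)+3/2))
        - ((-1:ℝ)^k * (((d:ℝ)+2*(i:ℝ)+7/2) * genBinom ((d:ℝ)) k * genBinom (2*(i:ℝ)+(k:ℝ)+3/2+1) (i+k+1) * ((i:ℝ)+3/2)))
            / (((d:ℝ)+2*(i:ℝ)+(k:ℝ)+7/2) * genBinom ((d:ℝ)+2*(i:ℝ)+(k:ℝ)+3/2+1) (i+k+1) * (2*(i:ℝ)+(d:ℝ)+7/2)) := by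
  have hd0 : (0:ℝ) ≤ (d:ℝ) := Nat.cast_nonneg d
  have hi0 : (0:ℝ) ≤ (i:ℝ) := Nat.cast_nonneg i
  have hk0 : (0:ℝ) ≤ (k:ℝ) := Nat.cast_nonneg k
  have hn : ((i+k+1:ℕ):ℝ) = (i:ℝ)+(k:ℝ)+1 := by push_cast; ring
  have hB'ne : genBinom ((d:ℝ)+2*(i:ℝ)+(k:ℝ)+3/2+1) (i+k+1) ≠ 0 :=
    (gb_pos _ _ (by rw [hn]; linarith)).ne'
  have hBne : genBinom ((d:ℝ)+2*(i:ℝ)+(k:ℝ)+3/2) (i+k+1) ≠ 0 :=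
    (gb_pos _ _ (by rw [hn]; linarith)).ne'
  have h1 : ((d:ℝ)+2*(i:ℝ)+(k:ℝ)+7/2) ≠ 0 := by positivity
  have h2 : ((d:ℝ)+2*(i:ℝ)+(k:ℝ)+5/2) ≠ 0 := by positivity
  have h3 : (2*(i:ℝ)+(d:ℝ)+3/2) ≠ 0 := by positivity
  have h4 : (2*(i:ℝ)+(d:ℝ)+7/2) ≠ 0 := by positivity
  have hD2 : ((d:ℝ)+2*(i:ℝ)+(k:ℝ)+5/2) * genBinom ((d:ℝ)+2*(i:ℝ)+(k:ℝ)+3/2) (i+k+1) * (2*(i:ℝ)+(d:ℝ)+3/2) ≠ 0 :=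
    mul_ne_zero (mul_ne_zero h2 hBne) h3
  have hD3 : ((d:ℝ)+2*(i:ℝ)+(k:ℝ)+7/2) * genBinom ((d:ℝ)+2*(i:ℝ)+(k:ℝ)+3/2+1) (i+k+1) * (2*(i:ℝ)+(d:ℝ)+7/2) ≠ 0 :=
    mul_ne_zero (mul_ne_zero h1 hB'ne) h4
  have hD1 : ((d:ℝ)+2*(i:ℝ)+(k:ℝ)+7/2) * genBinom ((d:ℝ)+2*(i:ℝ)+(k:ℝ)+3/2+1) (i+k+1) ≠ 0 :=
    mul_ne_zero h1 hB'ne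
  have hcore := crec_core d i k
  rw [div_sub_div _ _ hD2 hD3, div_eq_div_iff hD1 (mul_ne_zero hD2 hD3)]
  linear_combination ((-1:ℝ)^(k+1) * (2*(i:ℝ)+(d:ℝ)+3/2) * (2*(i:ℝ)+(d:ℝ)+7/2) * ((d:ℝ)+2*(i:ℝ)+(k:ℝ)+7/2)
    * genBinom ((d:ℝ)+2*(i:ℝ)+(k:ℝ)+3/2+1) (i+k+1)) * hcore

lemma coeff_rec (d j i : ℕ) (h : i ≤ j) :
    Fc (d+1) j i = Fc d j i * (((i:ℝ)+(d:ℝ)+3/2)/(2*(i:ℝ)+(d:ℝ)+3/2))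
      - (if i < j then Fc d j (i+1) * (((i:ℝ)+3/2)/(2*(i:ℝ)+(d:ℝ)+7/2)) else 0) := by
  rcases eq_or_lt_of_le h with rfl | hij
  · rw [if_neg (lt_irrefl _)]
    unfold Fc
    simp only [Nat.sub_self, pow_zero, gb_zero]
    push_cast
    have H := crec_top d i
    ring_nf at H ⊢
    linear_combination H
  · obtain ⟨k, rfl⟩ : ∃ k, j = i + (k+1) := ⟨j-i-1, by omega⟩
    rw [if_pos (by omega)]
    unfold Fc
    simp only [Nat.add_sub_cancel_left, show i+(k+1)-(i+1) = k from by omega]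
    push_cast
    rw [show (d:ℝ)+1+(i:ℝ)+((i:ℝ)+((k:ℝ)+1))+1/2 = (d:ℝ)+2*(i:ℝ)+(k:ℝ)+3/2+1 from by ring,
        show (d:ℝ)+((i:ℝ)+1)+((i:ℝ)+((k:ℝ)+1))+1/2 = (d:ℝ)+2*(i:ℝ)+(k:ℝ)+3/2+1 from by ring,
        show (d:ℝ)+(i:ℝ)+((i:ℝ)+((k:ℝ)+1))+1/2 = (d:ℝ)+2*(i:ℝ)+(k:ℝ)+3/2 from by ring,
        show (i:ℝ)+1+((i:ℝ)+((k:ℝ)+1))+1/2 = 2*(i:ℝ)+(k:ℝ)+3/2+1 from by ring,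
        show (i:ℝ)+((i:ℝ)+((k:ℝ)+1))+1/2 = 2*(i:ℝ)+(k:ℝ)+3/2 from by ring]
    simp only [show i+(k+1) = i+k+1 from rfl]
    simp only [div_mul_eq_mul_div, ← mul_div_assoc, div_div]
    have hd0 : (0:ℝ) ≤ (d:ℝ) := Nat.cast_nonneg d
    have hi0 : (0:ℝ) ≤ (i:ℝ) := Nat.cast_nonneg i
    have hk0 : (0:ℝ) ≤ (k:ℝ) := Nat.cast_nonneg k
    have hn : ((i+k+1:ℕ):ℝ) = (i:ℝ)+(k:ℝ)+1 := by push_cast; ring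
    have hB'ne : genBinom ((d:ℝ)+2*(i:ℝ)+(k:ℝ)+3/2+1) (i+k+1) ≠ 0 :=
      (gb_pos _ _ (by rw [hn]; linarith)).ne'
    have hBne : genBinom ((d:ℝ)+2*(i:ℝ)+(k:ℝ)+3/2) (i+k+1) ≠ 0 :=
      (gb_pos _ _ (by rw [hn]; linarith)).ne'
    have hs1 : ((d:ℝ)+1+(i:ℝ)+((i:ℝ)+((k:ℝ)+1))+3/2) ≠ 0 := by positivity
    have hs2 : ((d:ℝ)+(i:ℝ)+((i:ℝ)+((k:ℝ)+1))+3/2) ≠ 0 := by positivity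
    have hs3 : ((d:ℝ)+((i:ℝ)+1)+((i:ℝ)+((k:ℝ)+1))+3/2) ≠ 0 := by positivity
    have hs4 : (2*(i:ℝ)+(d:ℝ)+3/2) ≠ 0 := by positivity
    have hs5 : (2*(i:ℝ)+(d:ℝ)+7/2) ≠ 0 := by positivity
    have hD2 : ((d:ℝ)+(i:ℝ)+((i:ℝ)+((k:ℝ)+1))+3/2) * genBinom ((d:ℝ)+2*(i:ℝ)+(k:ℝ)+3/2) (i+k+1) * (2*(i:ℝ)+(d:ℝ)+3/2) ≠ 0 :=
      mul_ne_zero (mul_ne_zero hs2 hBne) hs4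
    have hD3 : ((d:ℝ)+((i:ℝ)+1)+((i:ℝ)+((k:ℝ)+1))+3/2) * genBinom ((d:ℝ)+2*(i:ℝ)+(k:ℝ)+3/2+1) (i+k+1) * (2*(i:ℝ)+(d:ℝ)+7/2) ≠ 0 :=
      mul_ne_zero (mul_ne_zero hs3 hB'ne) hs5
    have hD1 : ((d:ℝ)+1+(i:ℝ)+((i:ℝ)+((k:ℝ)+1))+3/2) * genBinom ((d:ℝ)+2*(i:ℝ)+(k:ℝ)+3/2+1) (i+k+1) ≠ 0 :=
      mul_ne_zero hs1 hB'ne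
    rw [div_sub_div _ _ hD2 hD3, div_eq_div_iff hD1 (mul_ne_zero hD2 hD3)]
    linear_combination ((-1:ℝ)^(k+1) * (2*(i:ℝ)+(d:ℝ)+3/2) * (2*(i:ℝ)+(d:ℝ)+7/2) * ((d:ℝ)+2*(i:ℝ)+(k:ℝ)+7/2)
      * genBinom ((d:ℝ)+2*(i:ℝ)+(k:ℝ)+3/2+1) (i+k+1)) * crec_core d i k



lemma jacobiP_zero (a b x : ℝ) : jacobiP 0 a b x = 1 := by
  simp [jacobiP, genBinom]

lemma Fc_diag (j : ℕ) : Fc 0 j j = 1 := by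
  unfold Fc
  simp only [Nat.sub_self, pow_zero, gb_zero, Nat.cast_zero]
  have hj0 : (0:ℝ) ≤ (j:ℝ) := Nat.cast_nonneg j
  have hA : genBinom ((j:ℝ)+(j:ℝ)+1/2) j ≠ 0 := (gb_pos _ _ (by linarith)).ne'
  rw [show (0:ℝ)+(j:ℝ)+(j:ℝ)+1/2 = (j:ℝ)+(j:ℝ)+1/2 from by ring]
  have hne : (0:ℝ)+(j:ℝ)+(j:ℝ)+3/2 ≠ 0 := by positivity
  rw [show (0:ℝ)+2*(j:ℝ)+3/2 = (0:ℝ)+(j:ℝ)+(j:ℝ)+3/2 from by ring, div_self hne]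
  simp only [one_mul, mul_one]
  exact div_self hA

lemma key (dl j : ℕ) (x : ℝ) :
    jacobiP j 0 (1/2) x = ∑ i ∈ Finset.range (j+1), Fc dl j i * jacobiP i (dl:ℝ) (1/2) x := by
  induction dl with
  | zero =>
    have hz : ∀ i ∈ Finset.range (j+1), i ≠ j → Fc 0 j i * jacobiP i ((0:ℕ):ℝ) (1/2) x = 0 := by
      intro i hi hne
      have hij : i ≤ j := Nat.lt_succ_iff.mp (Finset.mem_range.mp hi)
      have h0 : genBinom ((0:ℕ):ℝ) (j-i) = 0 := gb_nat_zero 0 (j-i) (by omega)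
      unfold Fc
      rw [h0]
      ring
    rw [Finset.sum_eq_single_of_mem j (Finset.self_mem_range_succ j) hz, Fc_diag, one_mul]
    norm_num
  | succ dl IH =>
    rw [IH]
    have hc : ∀ m:ℕ, jacobiP (m+1) (dl:ℝ) (1/2) x
        = (((m:ℝ)+1+(dl:ℝ)+3/2)/(2*(m:ℝ)+(dl:ℝ)+7/2)) * jacobiP (m+1) ((dl:ℝ)+1) (1/2) x
          - (((m:ℝ)+3/2)/(2*(m:ℝ)+(dl:ℝ)+7/2)) * jacobiP m ((dl:ℝ)+1) (1/2) x := by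
      intro m
      have h := contiguous m (dl:ℝ) (1/2) x
      have hne : (2*(m:ℝ)+(dl:ℝ)+7/2) ≠ 0 := by positivity
      field_simp
      linear_combination 2*h
    have hR : ∀ i ∈ Finset.range (j+1), Fc (dl+1) j i * jacobiP i ((dl+1:ℕ):ℝ) (1/2) x
        = Fc dl j i * (((i:ℝ)+(dl:ℝ)+3/2)/(2*(i:ℝ)+(dl:ℝ)+3/2)) * jacobiP i ((dl:ℝ)+1) (1/2) x
          - (if i < j then Fc dl j (i+1) * (((i:ℝ)+3/2)/(2*(i:ℝ)+(dl:ℝ)+7/2)) else 0) * jacobiP i ((dl:ℝ)+1) (1/2) x := by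
      intro i hi
      have hcast : ((dl+1:ℕ):ℝ) = (dl:ℝ)+1 := by push_cast; ring
      rw [hcast, coeff_rec dl j i (Nat.lt_succ_iff.mp (Finset.mem_range.mp hi))]
      ring
    rw [Finset.sum_congr rfl hR, Finset.sum_sub_distrib]
    have hS2 : ∑ i ∈ Finset.range (j+1), (if i < j then Fc dl j (i+1) * (((i:ℝ)+3/2)/(2*(i:ℝ)+(dl:ℝ)+7/2)) else 0) * jacobiP i ((dl:ℝ)+1) (1/2) x
        = ∑ i ∈ Finset.range j, Fc dl j (i+1) * (((i:ℝ)+3/2)/(2*(i:ℝ)+(dl:ℝ)+7/2)) * jacobiP i ((dl:ℝ)+1) (1/2) x := by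
      rw [Finset.sum_range_succ, if_neg (lt_irrefl j), zero_mul, add_zero]
      exact Finset.sum_congr rfl fun i hi => by rw [if_pos (Finset.mem_range.mp hi)]
    rw [hS2]
    rw [Finset.sum_range_succ' (fun i => Fc dl j i * (((i:ℝ)+(dl:ℝ)+3/2)/(2*(i:ℝ)+(dl:ℝ)+3/2)) * jacobiP i ((dl:ℝ)+1) (1/2) x) j]
    rw [Finset.sum_range_succ' (fun i => Fc dl j i * jacobiP i (dl:ℝ) (1/2) x) j]
    have hL : ∀ m ∈ Finset.range j, Fc dl j (m+1) * jacobiP (m+1) (dl:ℝ) (1/2) x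
        = Fc dl j (m+1) * ((((m+1:ℕ):ℝ)+(dl:ℝ)+3/2)/(2*((m+1:ℕ):ℝ)+(dl:ℝ)+3/2)) * jacobiP (m+1) ((dl:ℝ)+1) (1/2) x
          - Fc dl j (m+1) * (((m:ℝ)+3/2)/(2*(m:ℝ)+(dl:ℝ)+7/2)) * jacobiP m ((dl:ℝ)+1) (1/2) x := by
      intro m hm
      rw [hc m]
      push_cast
      have hne1 : (2*(m:ℝ)+(dl:ℝ)+7/2) ≠ 0 := by positivity
      have hne2 : (2*((m:ℝ)+1)+(dl:ℝ)+3/2) ≠ 0 := by positivity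
      field_simp
      ring
    have h0 : Fc dl j 0 * jacobiP 0 (dl:ℝ) (1/2) x
        = Fc dl j 0 * ((((0:ℕ):ℝ)+(dl:ℝ)+3/2)/(2*((0:ℕ):ℝ)+(dl:ℝ)+3/2)) * jacobiP 0 ((dl:ℝ)+1) (1/2) x := by
      rw [jacobiP_zero, jacobiP_zero]
      have hne : ((dl:ℝ)+3/2) ≠ 0 := by positivity
      push_cast
      rw [show 2*(0:ℝ)+(dl:ℝ)+3/2 = (dl:ℝ)+3/2 from by ring, show (0:ℝ)+(dl:ℝ)+3/2 = (dl:ℝ)+3/2 from by ring]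
      rw [div_self hne]
      ring
    rw [Finset.sum_congr rfl hL, Finset.sum_sub_distrib, h0]
    ring

theorem stmt17' (δ j : ℕ) (ρ : ℝ) :
    R3 0 0 j ρ * (1 - ρ ^ 2) ^ (δ : ℝ)
      = ∑ i ∈ Finset.Icc (j - δ) j, Fc δ j i * R3 (δ:ℝ) 0 i ρ := by
  have hsub : Finset.Icc (j-δ) j ⊆ Finset.range (j+1) := by
    intro t ht
    simp only [Finset.mem_Icc] at ht
    simp only [Finset.mem_range]
    omega
  have hvan : ∀ i ∈ Finset.range (j+1), i ∉ Finset.Icc (j-δ) j → Fc δ j i * R3 (δ:ℝ) 0 i ρ = 0 := by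
    intro i hi hni
    have h1 : i ≤ j := Nat.lt_succ_iff.mp (Finset.mem_range.mp hi)
    have h2 : δ < j - i := by
      simp only [Finset.mem_Icc] at hni
      omega
    unfold Fc
    rw [gb_nat_zero δ (j-i) h2]
    ring
  rw [Finset.sum_subset hsub hvan]
  unfold R3
  simp only [pow_zero, one_mul, Real.rpow_zero, Nat.cast_zero, zero_add]
  rw [key δ j (2*ρ^2-1), Finset.sum_mul]
  refine Finset.sum_congr rfl fun i hi => ?_
  ring

/-- `R_{2j}^{0,0}(ρ)(1−ρ²)^δ = Σ_{max(0,j−δ) ≤ i ≤ j} F_{ji}^δ R_{2i}^{0,δ}(ρ)`,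
with `F_{ji}^δ = (−1)^{j−i} ((δ+2i+3/2)/(δ+i+j+3/2)) C(δ, j−i) C(i+j+1/2, j) / C(δ+i+j+1/2, j)`. -/
theorem stmt17 (δ j : ℕ) (ρ : ℝ) (hρ : ρ ∈ Set.Icc (0:ℝ) 1) :
    R3 0 0 j ρ * (1 - ρ ^ 2) ^ (δ : ℝ)
      = ∑ i ∈ Finset.Icc (j - δ) j,
          (-1) ^ (j - i) * (((δ : ℝ) + 2 * (i : ℝ) + 3 / 2) / ((δ : ℝ) + (i : ℝ) + (j : ℝ) + 3 / 2)) *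
            genBinom (δ : ℝ) (j - i) * genBinom ((i : ℝ) + (j : ℝ) + 1 / 2) j /
            genBinom ((δ : ℝ) + (i : ℝ) + (j : ℝ) + 1 / 2) j * R3 (δ : ℝ) 0 i ρ := by
  exact stmt17' δ j ρ
end

section
/- Let α > −1 be real, and let β, l be nonnegative integers with β − l even and nonnegative. Then for all integers p ≥ 0, with n = l + 2p, b_n^{l,α} := ∫₀¹ ρ^{β} (1−ρ²)^{α} R_n^{l,α}(ρ) ρ² (1−ρ²)^{−α} dρ = (1/2) · Γ((β−l)/2 + 1)/(p! Γ((β−l)/2 − p + 1)) · Γ(p+α+1) Γ((β+l)/2 + 3/2) / Γ((β+l)/2 + p + α + 5/2); in particular b_n^{l,α} = 0 when p > (β−l)/2. -/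
open Real MeasureTheory

section ZernikeAux
open Set

lemma realBeta {u v : ℝ} (hu : 0 < u) (hv : 0 < v) :
    ∫ x in (0:ℝ)..1, x ^ (u-1) * (1-x) ^ (v-1)
      = Real.Gamma u * Real.Gamma v / Real.Gamma (u+v) := by
  have h := Complex.Gamma_mul_Gamma_eq_betaIntegral (s := (u:ℂ)) (t := (v:ℂ))
    (by simpa using hu) (by simpa using hv)
  have hb : Complex.betaIntegral u v
      = ((∫ x in (0:ℝ)..1, x ^ (u-1) * (1-x) ^ (v-1) : ℝ) : ℂ) := by
    rw [Complex.betaIntegral]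
    rw [← intervalIntegral.integral_ofReal]
    apply intervalIntegral.integral_congr
    intro x hx
    rw [Set.uIcc_of_le (by norm_num : (0:ℝ) ≤ 1)] at hx
    push_cast
    rw [Complex.ofReal_cpow hx.1, Complex.ofReal_cpow (by linarith [hx.2])]
    push_cast
    ring
  rw [hb, ← Complex.ofReal_add, Complex.Gamma_ofReal, Complex.Gamma_ofReal,
    Complex.Gamma_ofReal] at h
  have h2 : (Real.Gamma u * Real.Gamma v : ℝ)
      = Real.Gamma (u+v) * ∫ x in (0:ℝ)..1, x ^ (u-1) * (1-x) ^ (v-1) := by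
    exact_mod_cast h
  have h3 : Real.Gamma (u+v) ≠ 0 := (Real.Gamma_pos_of_pos (by linarith)).ne'
  field_simp [h3] at h2 ⊢
  linarith [h2]

lemma intOn_oneSub {s : ℝ} (hs : -1 < s) :
    IntegrableOn (fun x : ℝ => (1-x) ^ s) (Icc (0:ℝ) 1) := by
  have h := (intervalIntegral.intervalIntegrable_rpow' (a := (0:ℝ)) (b := 1) hs).comp_sub_left 1
  simp only [sub_zero, sub_self] at h
  have h2 := h.symm
  rw [intervalIntegrable_iff_integrableOn_Ioc_of_le (by norm_num)] at h2
  rwa [integrableOn_Icc_iff_integrableOn_Ioc]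

lemma intOn_oneSubSq {s : ℝ} (hs : -1 < s) :
    IntegrableOn (fun x : ℝ => (1-x^2) ^ s) (Icc (0:ℝ) 1) := by
  have hc : ContinuousOn (fun x : ℝ => (1+x) ^ s) (Icc (0:ℝ) 1) := by
    apply ContinuousOn.rpow_const (by fun_prop)
    intro x hx
    left
    have := hx.1
    simp only [mem_Icc] at hx
    nlinarith [hx.1]
  have h := (intOn_oneSub hs).continuousOn_mul hc isCompact_Icc
  apply h.congr_fun ?_ measurableSet_Icc
  intro x hx
  simp only [mem_Icc] at hx
  show (1+x)^s * (1-x)^s = (1-x^2)^s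
  rw [show (1:ℝ)-x^2 = (1-x)*(1+x) by ring,
    Real.mul_rpow (by linarith) (by linarith), mul_comm]

lemma intOn_main (n : ℕ) {s : ℝ} (hs : -1 < s) :
    IntegrableOn (fun ρ : ℝ => ρ ^ n * (1-ρ^2) ^ s) (Icc (0:ℝ) 1) :=
  (intOn_oneSubSq hs).continuousOn_mul (by fun_prop) isCompact_Icc

lemma intOn_g {e s : ℝ} (he : 0 < e) (hs : -1 < s) :
    IntegrableOn (fun t : ℝ => t ^ e * (1-t) ^ s) (Icc (0:ℝ) 1) := by
  have hc : ContinuousOn (fun t : ℝ => t ^ e) (Icc (0:ℝ) 1) :=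
    (continuous_iff_continuousAt.mpr fun x =>
      Real.continuousAt_rpow_const x e (Or.inr he.le)).continuousOn
  exact (intOn_oneSub hs).continuousOn_mul hc isCompact_Icc

lemma key_int (M : ℕ) (hM : 1 ≤ M) {s : ℝ} (hs : -1 < s) :
    ∫ ρ in (0:ℝ)..1, ρ ^ (2*M) * (1-ρ^2) ^ s
      = Real.Gamma ((M:ℝ) + 1/2) * Real.Gamma (s+1) / (2 * Real.Gamma ((M:ℝ) + s + 3/2)) := by
  set g : ℝ → ℝ := fun t => (1/2) * (t ^ ((M:ℝ) - 1/2) * (1-t) ^ s) with hg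
  have he : (0:ℝ) < (M:ℝ) - 1/2 := by
    have : (1:ℝ) ≤ (M:ℝ) := by exact_mod_cast hM
    linarith
  have hpull : ∀ x : ℝ, x ∈ Icc (0:ℝ) 1 →
      (2*x) • (g ∘ (fun y : ℝ => y^2)) x = x ^ (2*M) * (1-x^2) ^ s := by
    intro x hx
    simp only [Function.comp, hg, smul_eq_mul]
    have hx0 : (0:ℝ) ≤ x := hx.1
    have h1 : (x^2 : ℝ) ^ ((M:ℝ) - 1/2) = x ^ ((2*M : ℕ) - 1 : ℕ) := by
      rw [← Real.rpow_natCast x 2, ← Real.rpow_mul hx0, ← Real.rpow_natCast x (2*M-1)]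
      congr 1
      push_cast [Nat.cast_sub (by omega : 1 ≤ 2*M)]
      ring
    rw [h1]
    have h2 : x ^ (2*M) = x ^ (2*M - 1) * x := by
      rw [← pow_succ]; congr 1; omega
    rw [h2]; ring
  have himg1 : (fun y : ℝ => y^2) '' Icc 0 1 ⊆ Icc (0:ℝ) 1 := by
    rintro t ⟨x, hx, rfl⟩
    simp only [mem_Icc] at hx ⊢
    exact ⟨by positivity, by nlinarith [hx.1, hx.2]⟩
  have key := intervalIntegral.integral_comp_smul_deriv''' (a := (0:ℝ)) (b := 1)
    (f := fun y => y^2) (f' := fun y => 2*y) (g := g)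
    (by fun_prop)
    (by
      intro x hx
      simpa using ((hasDerivAt_pow 2 x).hasDerivWithinAt (s := Ioi x)))
    (by
      have hsub : (fun y : ℝ => y^2) '' Ioo (min 0 1) (max 0 1) ⊆ Ioo (0:ℝ) 1 := by
        simp only [min_eq_left zero_le_one, max_eq_right zero_le_one]
        rintro t ⟨x, hx, rfl⟩
        simp only [mem_Ioo] at hx ⊢
        exact ⟨by nlinarith [hx.1], by nlinarith [hx.1, hx.2]⟩
      apply ContinuousOn.mono ?_ hsub
      apply ContinuousOn.mul continuousOn_const
      apply ContinuousOn.mul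
      · exact (continuous_iff_continuousAt.mpr fun x =>
          Real.continuousAt_rpow_const x _ (Or.inr he.le)).continuousOn
      · apply ContinuousOn.rpow_const (by fun_prop)
        intro t ht
        left
        simp only [mem_Ioo] at ht
        intro hc
        nlinarith [ht.2])
    (by
      have hint : IntegrableOn g (Icc (0:ℝ) 1) := (intOn_g he hs).const_mul (1/2 : ℝ)
      exact hint.mono_set (by rw [uIcc_of_le (zero_le_one : (0:ℝ) ≤ 1)]; exact himg1))
    (by
      rw [uIcc_of_le (zero_le_one : (0:ℝ) ≤ 1)]
      exact (intOn_main (2*M) hs).congr_fun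
        (fun x hx => (hpull x hx).symm) measurableSet_Icc)
  simp only [one_pow, zero_pow, ne_eq, OfNat.ofNat_ne_zero, not_false_eq_true] at key
  have hL : ∫ ρ in (0:ℝ)..1, ρ ^ (2*M) * (1-ρ^2) ^ s
      = ∫ x in (0:ℝ)..1, (2*x) • (g ∘ (fun y : ℝ => y^2)) x := by
    apply intervalIntegral.integral_congr
    intro x hx
    rw [uIcc_of_le zero_le_one] at hx
    exact (hpull x hx).symm
  rw [hL, key]
  have : ∫ u in (0:ℝ)..1, g u = (1/2) * ∫ u in (0:ℝ)..1, u ^ ((M:ℝ)-1/2) * (1-u) ^ s := by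
    simp only [hg]
    rw [intervalIntegral.integral_const_mul]
  rw [this]
  have hbeta := realBeta (u := (M:ℝ) + 1/2) (v := s + 1) (by linarith) (by linarith)
  have harg1 : (M:ℝ) + 1/2 - 1 = (M:ℝ) - 1/2 := by ring
  have harg2 : s + 1 - 1 = s := by ring
  rw [harg1, harg2] at hbeta
  rw [hbeta]
  have harg3 : (M:ℝ) + 1/2 + (s+1) = (M:ℝ) + s + 3/2 := by ring
  rw [harg3]
  ring

lemma pochN_zero (x : ℝ) : pochN x 0 = 1 := by simp [pochN]

lemma pochN_succ (x : ℝ) (k : ℕ) : pochN x (k+1) = pochN x k * (x + k) := by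
  simp [pochN, Finset.prod_range_succ]

lemma vdm (p : ℕ) (x y : ℝ) :
    ∑ j ∈ Finset.range (p+1), (p.choose j : ℝ) * pochN x j * pochN y (p-j)
      = pochN (x+y) p := by
  induction p with
  | zero => simp [pochN]
  | succ p ih =>
    rw [Finset.sum_range_succ' _ (p+1)]
    have hT : ∀ j ∈ Finset.range (p+1),
        ((p+1).choose (j+1) : ℝ) * pochN x (j+1) * pochN y (p+1-(j+1))
          = (p.choose j : ℝ) * (pochN x j * (x+j)) * pochN y (p-j)
            + (p.choose (j+1) : ℝ) * pochN x (j+1) * pochN y (p-j) := by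
      intro j hj
      rw [Nat.choose_succ_succ, show p+1-(j+1) = p-j by omega, pochN_succ]
      push_cast
      ring
    rw [Finset.sum_congr rfl hT, Finset.sum_add_distrib, add_assoc]
    have hB : (∑ j ∈ Finset.range (p+1), (p.choose (j+1) : ℝ) * pochN x (j+1) * pochN y (p-j))
          + ((p+1).choose 0 : ℝ) * pochN x 0 * pochN y (p+1-0)
        = ∑ j ∈ Finset.range (p+1),
            (p.choose j : ℝ) * pochN x j * (pochN y (p-j) * (y + ((p-j : ℕ) : ℝ))) := by
      have hR : ∀ j ∈ Finset.range (p+1),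
          (p.choose j : ℝ) * pochN x j * (pochN y (p-j) * (y + ((p-j : ℕ) : ℝ)))
            = (p.choose j : ℝ) * pochN x j * pochN y (p+1-j) := by
        intro j hj
        simp only [Finset.mem_range] at hj
        rw [show p+1-j = (p-j)+1 by omega, pochN_succ]
      rw [Finset.sum_congr rfl hR, Finset.sum_range_succ'
        (fun j => (p.choose j : ℝ) * pochN x j * pochN y (p+1-j)) p]
      simp only [pochN_zero, Nat.succ_sub_succ, Nat.choose_zero_right, Nat.cast_one, one_mul,
        Nat.sub_zero]
      rw [Finset.sum_range_succ]
      simp [Nat.choose_succ_self]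
    rw [hB, ← Finset.sum_add_distrib]
    have hC : ∀ j ∈ Finset.range (p+1),
        (p.choose j : ℝ) * (pochN x j * (x+j)) * pochN y (p-j)
          + (p.choose j : ℝ) * pochN x j * (pochN y (p-j) * (y + ((p-j : ℕ) : ℝ)))
        = (p.choose j : ℝ) * pochN x j * pochN y (p-j) * (x+y+p) := by
      intro j hj
      simp only [Finset.mem_range] at hj
      rw [Nat.cast_sub (by omega : j ≤ p)]
      ring
    rw [Finset.sum_congr rfl hC, ← Finset.sum_mul, ih, ← pochN_succ]

lemma Gamma_pochN {x : ℝ} (hx : 0 < x) (n : ℕ) :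
    Real.Gamma (x + n) = pochN x n * Real.Gamma x := by
  induction n with
  | zero => simp [pochN_zero]
  | succ n ih =>
    have : x + ((n:ℝ)+1) = (x + n) + 1 := by ring
    rw [Nat.cast_add, Nat.cast_one, this, Real.Gamma_add_one (by positivity), ih, pochN_succ]
    ring

lemma genBinom_eq (a : ℝ) (k : ℕ) : genBinom a k = pochN (a - k + 1) k / (Nat.factorial k) := by
  unfold genBinom pochN
  congr 1
  rw [← Finset.prod_range_reflect]
  apply Finset.prod_congr rfl
  intro j hj
  simp only [Finset.mem_range] at hj
  rw [show k - 1 - j = k - (j+1) by omega, Nat.cast_sub (by omega : j + 1 ≤ k)]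
  push_cast
  ring

lemma pochN_nat_gamma (q p : ℕ) :
    pochN ((q:ℝ) - p + 1) p = Real.Gamma ((q:ℝ)+1) / Real.Gamma ((q:ℝ) - p + 1) := by
  rcases le_or_gt p q with h | h
  · have h1 : (0:ℝ) < (q:ℝ) - p + 1 := by
      have : (p:ℝ) ≤ q := by exact_mod_cast h
      linarith
    have h2 := Gamma_pochN h1 p
    have h3 : (q:ℝ) - p + 1 + p = (q:ℝ) + 1 := by ring
    rw [h3] at h2
    rw [h2]
    field_simp [(Real.Gamma_pos_of_pos h1).ne']
  · have hz : Real.Gamma ((q:ℝ) - p + 1) = 0 := by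
      have : (q:ℝ) - p + 1 = -((p - q - 1 : ℕ) : ℝ) := by
        rw [show p - q - 1 = p - (q+1) by omega, Nat.cast_sub (by omega : q + 1 ≤ p)]
        push_cast
        ring
      rw [this, Real.Gamma_neg_nat_eq_zero]
    rw [hz, div_zero]
    unfold pochN
    apply Finset.prod_eq_zero (Finset.mem_range.mpr (by omega : p - q - 1 < p))
    rw [show p - q - 1 = p - (q+1) by omega, Nat.cast_sub (by omega : q + 1 ≤ p)]
    push_cast
    ring

lemma core (α b σ : ℝ) (hα : -1 < α) (hσ : 0 < σ) (p : ℕ) :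
    ∑ j ∈ Finset.range (p+1),
      genBinom ((p:ℝ)+α) (p-j) * genBinom ((p:ℝ)+b) j * (-1:ℝ)^j *
        (Real.Gamma (σ + ((p-j : ℕ) : ℝ) + 1) * Real.Gamma (α + j + 1))
    = Real.Gamma ((p:ℝ)+α+1) * Real.Gamma (σ+1) * pochN (σ - b - p + 1) p
        / (Nat.factorial p : ℝ) := by
  have hstep : ∀ j ∈ Finset.range (p+1),
      genBinom ((p:ℝ)+α) (p-j) * genBinom ((p:ℝ)+b) j * (-1:ℝ)^j *
        (Real.Gamma (σ + ((p-j : ℕ) : ℝ) + 1) * Real.Gamma (α + j + 1))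
      = (Real.Gamma ((p:ℝ)+α+1) * Real.Gamma (σ+1) / (Nat.factorial p : ℝ)) *
          ((p.choose j : ℝ) * pochN (-(p:ℝ) - b) j * pochN (σ+1) (p-j)) := by
    intro j hj
    simp only [Finset.mem_range] at hj
    have hjp : j ≤ p := by omega
    -- genBinom (p+α) (p-j) = pochN (α+j+1) (p-j) / (p-j)!
    have h1 : genBinom ((p:ℝ)+α) (p-j) = pochN (α + j + 1) (p-j) / (Nat.factorial (p-j)) := by
      rw [genBinom_eq]
      congr 2
      rw [Nat.cast_sub hjp]
      ring
    -- genBinom (p+b) j * (-1)^j = pochN (-(p:ℝ)-b) j / j!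
    have h2 : genBinom ((p:ℝ)+b) j * (-1:ℝ)^j = pochN (-(p:ℝ) - b) j / (Nat.factorial j) := by
      unfold genBinom pochN
      rw [div_mul_eq_mul_div]
      congr 1
      have : ∀ i ∈ Finset.range j, (-(p:ℝ) - b + i) = (-1) * ((p:ℝ) + b - i) := by
        intro i _; ring
      rw [Finset.prod_congr rfl this, Finset.prod_mul_distrib, Finset.prod_const,
        Finset.card_range, mul_comm]
    -- Gamma shifts
    have h3 : Real.Gamma (σ + ((p-j : ℕ) : ℝ) + 1) = pochN (σ+1) (p-j) * Real.Gamma (σ+1) := by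
      have := Gamma_pochN (x := σ+1) (by linarith) (p-j)
      rw [← this]
      congr 1
      ring
    have h4 : pochN (α+j+1) (p-j) * Real.Gamma (α+j+1) = Real.Gamma ((p:ℝ)+α+1) := by
      have hpos : (0:ℝ) < α + j + 1 := by
        have : (0:ℝ) ≤ j := Nat.cast_nonneg j
        linarith
      rw [← Gamma_pochN hpos (p-j)]
      congr 1
      rw [Nat.cast_sub hjp]
      ring
    have h5 : (p.choose j : ℝ) * (Nat.factorial j) * (Nat.factorial (p-j)) = Nat.factorial p := by
      exact_mod_cast congrArg (Nat.cast : ℕ → ℝ) (Nat.choose_mul_factorial_mul_factorial hjp)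
    have hfj : (Nat.factorial j : ℝ) ≠ 0 := by positivity
    have hfpj : (Nat.factorial (p-j) : ℝ) ≠ 0 := by positivity
    have hfp : (Nat.factorial p : ℝ) ≠ 0 := by positivity
    have hfj : (Nat.factorial j : ℝ) ≠ 0 := by positivity
    have h2' : genBinom ((p:ℝ)+b) j * (-1:ℝ)^j * (Nat.factorial j : ℝ)
        = pochN (-(p:ℝ) - b) j := by
      rw [h2]; field_simp
    have hc0 : (0:ℝ) < (p.choose j : ℝ) := by exact_mod_cast Nat.choose_pos hjp
    rw [h1, h3, ← h4, ← h5]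
    field_simp
    linear_combination (pochN (α + (j:ℝ) + 1) (p-j) * pochN (σ+1) (p-j) *
      Real.Gamma (α + (j:ℝ) + 1)) * h2'
  rw [Finset.sum_congr rfl hstep, ← Finset.mul_sum]
  have hv : ∑ j ∈ Finset.range (p+1),
      (p.choose j : ℝ) * pochN (-(p:ℝ) - b) j * pochN (σ+1) (p-j)
      = pochN (σ - b - p + 1) p := by
    have := vdm p (-(p:ℝ) - b) (σ+1)
    rw [this]
    congr 1
    ring
  rw [hv]
  ring


/-- the expansion coefficients
`b_n^{l,α} = ∫₀¹ ρ^β (1−ρ²)^α R_n^{l,α}(ρ) ρ² (1−ρ²)^{−α} dρ`, `n = l + 2p`, for `β − l` even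
and nonnegative; `1/Γ(z) = 0` at nonpositive integers `z` (Mathlib's `Real.Gamma` vanishes there),
so in particular `b_n^{l,α} = 0` when `p > (β−l)/2`. -/
theorem stmt18 (α : ℝ) (hα : -1 < α) (β l : ℕ) (hle : l ≤ β) (heven : Even (β - l)) (p : ℕ) :
    (∫ ρ in (0:ℝ)..1, ρ ^ β * (1 - ρ ^ 2) ^ α * R3 α l p ρ * ρ ^ 2 * (1 - ρ ^ 2) ^ (-α)
      = 1 / 2 * (Real.Gamma (((β : ℝ) - l) / 2 + 1) /
            ((Nat.factorial p : ℝ) * Real.Gamma (((β : ℝ) - l) / 2 - p + 1))) *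
          (Real.Gamma ((p : ℝ) + α + 1) * Real.Gamma (((β : ℝ) + l) / 2 + 3 / 2) /
            Real.Gamma (((β : ℝ) + l) / 2 + p + α + 5 / 2)))
    ∧ ((β - l) / 2 < p →
        ∫ ρ in (0:ℝ)..1, ρ ^ β * (1 - ρ ^ 2) ^ α * R3 α l p ρ * ρ ^ 2 * (1 - ρ ^ 2) ^ (-α) = 0) := by
  obtain ⟨q, hq⟩ : ∃ q, β = l + 2*q := by
    obtain ⟨r, hr⟩ := heven
    exact ⟨r, by omega⟩
  subst hq
  set c : ℕ → ℝ := fun j => genBinom ((p:ℝ)+α) (p-j) * genBinom ((p:ℝ)+((l:ℝ)+1/2)) j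
    * (-1:ℝ)^j with hc
  set M : ℕ → ℕ := fun j => l+q+1+(p-j) with hM
  have hβr : (((l + 2*q : ℕ) : ℝ) - l) / 2 = (q : ℝ) := by push_cast; ring
  have hβ2 : (((l + 2*q : ℕ) : ℝ) + l) / 2 = (l : ℝ) + q := by push_cast; ring
  have hmain : ∫ ρ in (0:ℝ)..1,
        ρ ^ (l+2*q) * (1 - ρ ^ 2) ^ α * R3 α l p ρ * ρ ^ 2 * (1 - ρ ^ 2) ^ (-α)
      = 1 / 2 * (Real.Gamma ((q:ℝ) + 1) /
            ((Nat.factorial p : ℝ) * Real.Gamma ((q:ℝ) - p + 1))) *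
          (Real.Gamma ((p : ℝ) + α + 1) * Real.Gamma ((l:ℝ) + q + 3 / 2) /
            Real.Gamma ((l:ℝ) + q + p + α + 5 / 2)) := by
    have hEq : EqOn
        (fun ρ : ℝ => ρ ^ (l+2*q) * (1 - ρ ^ 2) ^ α * R3 α l p ρ * ρ ^ 2 * (1 - ρ ^ 2) ^ (-α))
        (fun ρ : ℝ => ∑ j ∈ Finset.range (p+1), c j * (ρ ^ (2 * M j) * (1-ρ^2) ^ (α + j)))
        (Ioo (0:ℝ) 1) := by
      intro ρ hρ
      simp only [mem_Ioo] at hρ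
      have hρ0 : 0 < ρ := hρ.1
      have h1ρ : 0 < 1 - ρ^2 := by nlinarith [hρ.2]
      simp only [R3, jacobiP]
      rw [Finset.mul_sum, Finset.mul_sum, Finset.sum_mul, Finset.sum_mul]
      apply Finset.sum_congr rfl
      intro j hj
      simp only [Finset.mem_range] at hj
      have hjp : j ≤ p := by omega
      have e1 : (2*ρ^2 - 1 - 1)/2 = -(1-ρ^2) := by ring
      have e2 : (2*ρ^2 - 1 + 1)/2 = ρ^2 := by ring
      rw [e1, e2, neg_pow]
      -- collect the rpow powers of (1 - ρ^2)
      have hr1 : (1-ρ^2) ^ α * (1-ρ^2) ^ α * (1-ρ^2) ^ (-α) * (1-ρ^2) ^ (j:ℕ)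
          = (1-ρ^2) ^ (α + j) := by
        rw [← Real.rpow_natCast (1-ρ^2) j, ← Real.rpow_add h1ρ, ← Real.rpow_add h1ρ,
          ← Real.rpow_add h1ρ]
        congr 1
        ring
      -- collect the powers of ρ
      have hr2 : ρ ^ (l+2*q) * ρ ^ l * ρ ^ 2 * (ρ^2) ^ (p-j) = ρ ^ (2 * M j) := by
        rw [← pow_mul, ← pow_add, ← pow_add, ← pow_add]
        congr 1
        simp only [hM]
        omega
      calc ρ ^ (l+2*q) * (1-ρ^2) ^ α *
            (ρ ^ l * (1-ρ^2) ^ α *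
              (genBinom ((p:ℝ)+α) (p-j) * genBinom ((p:ℝ)+((l:ℝ)+1/2)) j *
                ((-1:ℝ)^j * (1-ρ^2)^(j:ℕ)) * (ρ^2) ^ (p-j))) * ρ ^ 2 * (1-ρ^2) ^ (-α)
          = (genBinom ((p:ℝ)+α) (p-j) * genBinom ((p:ℝ)+((l:ℝ)+1/2)) j * (-1:ℝ)^j) *
            ((ρ ^ (l+2*q) * ρ ^ l * ρ ^ 2 * (ρ^2) ^ (p-j)) *
             ((1-ρ^2) ^ α * (1-ρ^2) ^ α * (1-ρ^2) ^ (-α) * (1-ρ^2) ^ (j:ℕ))) := by ring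
        _ = c j * (ρ ^ (2 * M j) * (1-ρ^2) ^ (α + j)) := by rw [hr1, hr2, hc]
    have hint : ∀ j ∈ Finset.range (p+1), -1 < α + (j:ℝ) := by
      intro j hj
      have : (0:ℝ) ≤ j := Nat.cast_nonneg j
      linarith
    calc ∫ ρ in (0:ℝ)..1,
          ρ ^ (l+2*q) * (1 - ρ ^ 2) ^ α * R3 α l p ρ * ρ ^ 2 * (1 - ρ ^ 2) ^ (-α)
        = ∫ ρ in Ioo (0:ℝ) 1,
            ρ ^ (l+2*q) * (1 - ρ ^ 2) ^ α * R3 α l p ρ * ρ ^ 2 * (1 - ρ ^ 2) ^ (-α) := by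
          rw [intervalIntegral.integral_of_le zero_le_one, integral_Ioc_eq_integral_Ioo]
      _ = ∫ ρ in Ioo (0:ℝ) 1,
            ∑ j ∈ Finset.range (p+1), c j * (ρ ^ (2 * M j) * (1-ρ^2) ^ (α + j)) := by
          exact setIntegral_congr_fun measurableSet_Ioo hEq
      _ = ∑ j ∈ Finset.range (p+1),
            ∫ ρ in Ioo (0:ℝ) 1, c j * (ρ ^ (2 * M j) * (1-ρ^2) ^ (α + j)) := by
          apply integral_finset_sum
          intro j hj
          exact (((intOn_main (2 * M j) (hint j hj)).mono_set Ioo_subset_Icc_self).const_mul (c j))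
      _ = ∑ j ∈ Finset.range (p+1),
            c j * ∫ ρ in (0:ℝ)..1, ρ ^ (2 * M j) * (1-ρ^2) ^ (α + j) := by
          apply Finset.sum_congr rfl
          intro j hj
          rw [MeasureTheory.integral_const_mul, intervalIntegral.integral_of_le zero_le_one,
            integral_Ioc_eq_integral_Ioo]
      _ = ∑ j ∈ Finset.range (p+1),
            c j * (Real.Gamma ((M j : ℝ) + 1/2) * Real.Gamma ((α + j) + 1)
              / (2 * Real.Gamma ((M j : ℝ) + (α + j) + 3/2))) := by
          apply Finset.sum_congr rfl
          intro j hj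
          rw [key_int (M j) (by simp only [hM]; omega) (hint j hj)]
      _ = (∑ j ∈ Finset.range (p+1),
            genBinom ((p:ℝ)+α) (p-j) * genBinom ((p:ℝ)+((l:ℝ)+1/2)) j * (-1:ℝ)^j *
              (Real.Gamma (((l:ℝ)+q+1/2) + ((p-j : ℕ) : ℝ) + 1) * Real.Gamma (α + j + 1)))
            * (1 / (2 * Real.Gamma ((l:ℝ) + q + p + α + 5/2))) := by
          rw [Finset.sum_mul]
          apply Finset.sum_congr rfl
          intro j hj
          simp only [Finset.mem_range] at hj
          have hMj : ((M j : ℕ) : ℝ) = (l:ℝ) + q + 1 + ((p-j : ℕ) : ℝ) := by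
            simp only [hM]; push_cast; ring
          have hpj : ((p - j : ℕ) : ℝ) = (p:ℝ) - j := by
            rw [Nat.cast_sub (by omega : j ≤ p)]
          have hA : ((M j : ℕ) : ℝ) + 1/2 = ((l:ℝ)+q+1/2) + ((p-j : ℕ) : ℝ) + 1 := by
            rw [hMj]; ring
          have hB : ((M j : ℕ) : ℝ) + (α + j) + 3/2 = (l:ℝ) + q + p + α + 5/2 := by
            rw [hMj, hpj]; ring
          rw [hA, hB, hc]
          have hC : α + (j:ℝ) + 1 = α + j + 1 := by ring
          ring
      _ = 1 / 2 * (Real.Gamma ((q:ℝ) + 1) /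
            ((Nat.factorial p : ℝ) * Real.Gamma ((q:ℝ) - p + 1))) *
          (Real.Gamma ((p : ℝ) + α + 1) * Real.Gamma ((l:ℝ) + q + 3 / 2) /
            Real.Gamma ((l:ℝ) + q + p + α + 5 / 2)) := by
          rw [core α ((l:ℝ)+1/2) ((l:ℝ)+q+1/2) hα (by positivity) p]
          have h1 : ((l:ℝ)+q+1/2) - ((l:ℝ)+1/2) - p + 1 = (q:ℝ) - p + 1 := by ring
          have h2 : ((l:ℝ)+q+1/2) + 1 = (l:ℝ) + q + 3/2 := by ring
          rw [h1, h2, pochN_nat_gamma q p]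
          ring
  refine ⟨by rw [hmain, hβr, hβ2], ?_⟩
  intro hlt
  have hqp : q < p := by omega
  rw [hmain]
  have hz : Real.Gamma ((q:ℝ) - p + 1) = 0 := by
    have : (q:ℝ) - p + 1 = -((p - q - 1 : ℕ) : ℝ) := by
      rw [show p - q - 1 = p - (q+1) by omega, Nat.cast_sub (by omega : q + 1 ≤ p)]
      push_cast
      ring
    rw [this, Real.Gamma_neg_nat_eq_zero]
  rw [hz]
  simp

end ZernikeAux
end
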